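/- Proposition (failure of non-exploring sequential learning). In the abstract sequential policy learning setup, suppose W 0 is constantly equal to W₀ with W* ⊆ W₀ and W* ≠ W₀, and suppose that for every t the event E_t := {ω | ¬(W t ω ⊆ W (t+1) ω)} (the update at step t is exploring) is measurable with ℙ(E_t) ≤ δ_t, and that the event {ω | W T ω = W*} is measurable. Then for every T ∈ ℕ, ℙ(W T = W*) ≤ Σ_{t=0}^{T−1} δ_t; equivalently, ℙ(W T ≠ W*) ≥ 1 − Σ_{t=0}^{T−1} δ_t. -/

import Mathlib

open MeasureTheory
open scoped ENNReal

/-- Failure of non-exploring sequential learning (Proposition 7.2, Chapter 7).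
Identifying deterministic policies with their negative-decision regions `W t ω ⊆ S`,
if the initial region strictly contains the optimal region `W*` and the update at each
step `t` is exploring with probability at most `δ t`, then for every `T`,
`ℙ(W T = W*) ≤ Σ_{t<T} δ t`. -/
theorem non_exploring_sequential_learning_fails
    {Ω S : Type*} [MeasurableSpace Ω] (P : Measure Ω) [IsProbabilityMeasure P]
    (W : ℕ → Ω → Set S) (W₀ Wstar : Set S)
    (hW0 : ∀ ω, W 0 ω = W₀) (hsub : Wstar ⊆ W₀) (hne : Wstar ≠ W₀)
    (δ : ℕ → ℝ≥0∞)
    (hEmeas : ∀ t, MeasurableSet {ω | ¬ W t ω ⊆ W (t + 1) ω})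
    (hδ : ∀ t, P {ω | ¬ W t ω ⊆ W (t + 1) ω} ≤ δ t)
    (hTmeas : ∀ T, MeasurableSet {ω | W T ω = Wstar}) :
    ∀ T : ℕ, P {ω | W T ω = Wstar} ≤ ∑ t ∈ Finset.range T, δ t := by
  intro T
  have hsubset : {ω | W T ω = Wstar} ⊆
      ⋃ t ∈ Finset.range T, {ω | ¬ W t ω ⊆ W (t + 1) ω} := by
    intro ω hω
    by_contra hnot
    simp only [Set.mem_iUnion, Finset.mem_range, not_exists, Set.mem_setOf_eq,
      not_not] at hnot
    have hmono : ∀ t ≤ T, W₀ ⊆ W t ω := by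
      intro t ht
      induction t with
      | zero => rw [hW0]
      | succ n ih =>
        exact (ih (Nat.le_of_succ_le ht)).trans (hnot n (Nat.lt_of_succ_le ht))
    have : W₀ ⊆ Wstar := hω ▸ hmono T le_rfl
    exact hne (Set.Subset.antisymm hsub this)
  calc P {ω | W T ω = Wstar} ≤ P (⋃ t ∈ Finset.range T, {ω | ¬ W t ω ⊆ W (t + 1) ω}) :=
        measure_mono hsubset
    _ ≤ ∑ t ∈ Finset.range T, P {ω | ¬ W t ω ⊆ W (t + 1) ω} :=
        measure_biUnion_finset_le _ _
    _ ≤ ∑ t ∈ Finset.range T, δ t := Finset.sum_le_sum fun t _ => hδ t
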